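/- arXiv:1305.4909 — 2 statements merged into one kernel-verified Lean document; each statement's English description precedes it below -/
import Mathlib

section
/- Let G be a finite graph and k ∈ ℕ, and let O be an orientation of the set S_k of all proper separations of G of order < k. Then O is consistent if and only if for every tree-decomposition (T,𝒱) of G of adhesion < k all of whose induced separations are proper, there is a node t of T such that O ∩ N = O(t), where N denotes the set of separations induced by the oriented edges of T. -/
open SimpleGraph Set

namespace CanonicalTD

variable {V : Type*} {ι : Type*}

/-- `p = (A,B)` is a separation of `G`: `A ∪ B = V` and no edge between `A∖B` and `B∖A`. -/
def IsSep (G : SimpleGraph V) (p : Set V × Set V) : Prop :=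
  p.1 ∪ p.2 = univ ∧ ∀ a ∈ p.1 \ p.2, ∀ b ∈ p.2 \ p.1, ¬G.Adj a b

/-- The order `|A ∩ B|` of a separation `(A,B)`. -/
noncomputable def sepOrder (p : Set V × Set V) : ℕ := (p.1 ∩ p.2).ncard

/-- A separation is proper if both `A∖B` and `B∖A` are nonempty. -/
def ProperSep (p : Set V × Set V) : Prop := (p.1 \ p.2).Nonempty ∧ (p.2 \ p.1).Nonempty

/-- The partial order on separations: `(A,B) ≤ (C,D)` iff `A ⊆ C` and `D ⊆ B`. -/
def SepLE (p q : Set V × Set V) : Prop := p.1 ⊆ q.1 ∧ q.2 ⊆ p.2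

/-- Two separations are nested if they become comparable after possibly inverting. -/
def Nested (p q : Set V × Set V) : Prop :=
  SepLE p q ∨ SepLE q p ∨ SepLE p q.swap ∨ SepLE q.swap p

/-- A separation `(A,B)` is tight if every vertex of `A ∩ B` has a neighbour in `A∖B`
and a neighbour in `B∖A`. -/
def TightSep (G : SimpleGraph V) (p : Set V × Set V) : Prop :=
  ∀ v ∈ p.1 ∩ p.2, (∃ a ∈ p.1 \ p.2, G.Adj v a) ∧ ∃ b ∈ p.2 \ p.1, G.Adj v b

/-- `S_k`: the set of all proper separations of `G` of order `< k`. -/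
def Sk (G : SimpleGraph V) (k : ℕ) : Set (Set V × Set V) :=
  {p | IsSep G p ∧ ProperSep p ∧ sepOrder p < k}

/-- A separation system of `G`: a set of separations closed under inverses. -/
def IsSepSystem (G : SimpleGraph V) (N : Set (Set V × Set V)) : Prop :=
  (∀ p ∈ N, IsSep G p) ∧ ∀ p ∈ N, p.swap ∈ N

def NestedSystem (N : Set (Set V × Set V)) : Prop :=
  ∀ p ∈ N, ∀ q ∈ N, Nested p q

def ProperSystem (N : Set (Set V × Set V)) : Prop := ∀ p ∈ N, ProperSep p

/-- An orientation of `N`: contains exactly one of `(A,B)`, `(B,A)` for each `(A,B) ∈ N`. -/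
def IsOrientation (N O : Set (Set V × Set V)) : Prop :=
  O ⊆ N ∧ ∀ p ∈ N, (p ∈ O ↔ p.swap ∉ O)

/-- Consistency: no distinct `(A,B),(C,D) ∈ O` with `(D,C) ≤ (A,B)`. -/
def Consistent (O : Set (Set V × Set V)) : Prop :=
  ∀ p ∈ O, ∀ q ∈ O, p ≠ q → ¬SepLE q.swap p

/-- A `k`-profile of `G`. -/
def IsProfile (G : SimpleGraph V) (k : ℕ) (P : Set (Set V × Set V)) : Prop :=
  IsOrientation (Sk G k) P ∧ Consistent P ∧
    ∀ p ∈ P, ∀ q ∈ P, (p.2 ∩ q.2, p.1 ∪ q.1) ∉ P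

/-- `(T, Vt)` is a tree-decomposition of `G`. -/
def IsTreeDecomp (G : SimpleGraph V) (T : SimpleGraph ι) (Vt : ι → Set V) : Prop :=
  T.IsTree ∧ (⋃ t, Vt t) = univ ∧
  (∀ u v, G.Adj u v → ∃ t, u ∈ Vt t ∧ v ∈ Vt t) ∧
  ∀ (t1 t3 : ι) (w : T.Walk t1 t3), w.IsPath →
    ∀ t2 ∈ w.support, Vt t1 ∩ Vt t3 ⊆ Vt t2

/-- The vertex set of the component of `T - t1t2` containing `t1`. -/
def side (T : SimpleGraph ι) (t1 t2 : ι) : Set ι :=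
  {s | (T.deleteEdges {s(t1, t2)}).Reachable t1 s}

/-- The separation induced by the oriented edge `(t1, t2)` of `T`. -/
def inducedSep (T : SimpleGraph ι) (Vt : ι → Set V) (t1 t2 : ι) : Set V × Set V :=
  (⋃ s ∈ side T t1 t2, Vt s, ⋃ s ∈ side T t2 t1, Vt s)

/-- The set of separations induced by oriented edges of `T`. -/
def inducedSeps (T : SimpleGraph ι) (Vt : ι → Set V) : Set (Set V × Set V) :=
  {p | ∃ t1 t2, T.Adj t1 t2 ∧ p = inducedSep T Vt t1 t2}

/-- `O(t)`: separations induced by oriented edges `(t1,t2)` with `t` in the component of `t2`. -/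
def Otow (T : SimpleGraph ι) (Vt : ι → Set V) (t : ι) : Set (Set V × Set V) :=
  {p | ∃ t1 t2, T.Adj t1 t2 ∧ t ∈ side T t2 t1 ∧ p = inducedSep T Vt t1 t2}

/-- The map assigning to each oriented edge of `T` its induced separation is a bijection
onto `N`. -/
def EdgeSepBij (T : SimpleGraph ι) (Vt : ι → Set V) (N : Set (Set V × Set V)) : Prop :=
  (∀ t1 t2, T.Adj t1 t2 → inducedSep T Vt t1 t2 ∈ N) ∧
  ∀ p ∈ N, ∃! e : ι × ι, T.Adj e.1 e.2 ∧ inducedSep T Vt e.1 e.2 = p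

/-- The tree-decomposition has adhesion `< k`. -/
def AdhesionLt (T : SimpleGraph ι) (Vt : ι → Set V) (k : ℕ) : Prop :=
  ∀ t1 t2, T.Adj t1 t2 → (Vt t1 ∩ Vt t2).ncard < k

/-- The tree-decomposition is canonical: the automorphism group of `G` acts on `T`
compatibly with the parts. -/
def Canonical (G : SimpleGraph V) (T : SimpleGraph ι) (Vt : ι → Set V) : Prop :=
  ∃ ρ : (G ≃g G) → (T ≃g T),
    (∀ φ ψ : G ≃g G, ρ (φ.trans ψ) = (ρ φ).trans (ρ ψ)) ∧
    ∀ (φ : G ≃g G) (t : ι), (⇑φ) '' Vt t = Vt (ρ φ t)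

/-- `X` is `(<k)`-inseparable in `G`. -/
def Inseparable' (G : SimpleGraph V) (k : ℕ) (X : Set V) : Prop :=
  ∀ p : Set V × Set V, IsSep G p → sepOrder p < k → X ⊆ p.1 ∨ X ⊆ p.2

/-- `X` is a `k`-block of `G`: a maximal `(<k)`-inseparable set of at least `k` vertices. -/
def IsBlock (G : SimpleGraph V) (k : ℕ) (X : Set V) : Prop :=
  k ≤ X.ncard ∧ Inseparable' G k X ∧
    ∀ Y, Inseparable' G k Y → X ⊆ Y → Y = X

/-- The `k`-profile `P_k(X)` induced by a `k`-block `X`. -/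
def blockProfile (G : SimpleGraph V) (k : ℕ) (X : Set V) : Set (Set V × Set V) :=
  {p | p ∈ Sk G k ∧ X ⊆ p.2 ∧ ¬X ⊆ p.1}

/-- `p` is a `≤`-maximal element of `M`. -/
def MaxIn (M : Set (Set V × Set V)) (p : Set V × Set V) : Prop :=
  p ∈ M ∧ ∀ q ∈ M, SepLE p q → q = p

/-- The `k`-block `X` is well separated in `S`: the maximal elements of `P_k(X) ∩ S`
are pairwise nested. -/
def WellSepIn (G : SimpleGraph V) (k : ℕ) (X : Set V) (S : Set (Set V × Set V)) : Prop :=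
  ∀ p q, MaxIn (blockProfile G k X ∩ S) p → MaxIn (blockProfile G k X ∩ S) q → Nested p q

/-- `D` is the vertex set of a component of `G - X`. -/
def IsCompOf (G : SimpleGraph V) (X D : Set V) : Prop :=
  D ⊆ Xᶜ ∧ (G.induce D).Connected ∧
    ∀ D', D ⊆ D' → D' ⊆ Xᶜ → (G.induce D').Connected → D' = D

/-- `S(X)`: the set of tight separations `(A,B)` with `X ⊆ B` and `A∖B` the vertex set of
a component of `G - X`. -/
def SX (G : SimpleGraph V) (X : Set V) : Set (Set V × Set V) :=
  {p | IsSep G p ∧ TightSep G p ∧ X ⊆ p.2 ∧ IsCompOf G X (p.1 \ p.2)}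

/-- `G` is `m`-connected. -/
def IsKConnected (G : SimpleGraph V) [Fintype V] (m : ℕ) : Prop :=
  m < Fintype.card V ∧ ∀ U : Set V, U.ncard < m → (G.induce Uᶜ).Connected

/-- The tree-decomposition distinguishes the set `Profs` of profiles. -/
def DistinguishesProfiles (T : SimpleGraph ι) (Vt : ι → Set V)
    (Profs : Set (Set (Set V × Set V))) : Prop :=
  ∀ P ∈ Profs, ∀ P' ∈ Profs, P ≠ P' → ∃ p ∈ inducedSeps T Vt, p ∈ P ∧ p.swap ∈ P'

/-- The tree-decomposition distinguishes every two distinct `k`-blocks efficiently. -/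
def DistinguishesBlocksEff (G : SimpleGraph V) (k : ℕ) (T : SimpleGraph ι)
    (Vt : ι → Set V) : Prop :=
  ∀ X X', IsBlock G k X → IsBlock G k X' → X ≠ X' →
    ∃ p ∈ inducedSeps T Vt, X ⊆ p.1 ∧ X' ⊆ p.2 ∧
      ∀ q : Set V × Set V, IsSep G q → X ⊆ q.1 → X' ⊆ q.2 → sepOrder p ≤ sepOrder q



lemma walk_closed {H : SimpleGraph ι} {U : Set ι}
    (hU : ∀ x ∈ U, ∀ y, H.Adj x y → y ∈ U) :
    ∀ {x s : ι}, (w : H.Walk x s) → x ∈ U → s ∈ U := by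
  intro x s w
  induction w with
  | nil => exact id
  | cons h _ ih => exact fun hx => ih (hU _ hx _ h)

lemma mem_side_self (T : SimpleGraph ι) (a b : ι) : a ∈ side T a b := Reachable.refl a

lemma side_step {T : SimpleGraph ι} {a b x y : ι} (hadj : T.Adj x y)
    (hne : s(x, y) ≠ s(a, b)) (hx : x ∈ side T a b) : y ∈ side T a b :=
  hx.trans (Adj.reachable (by simp [hne, hadj]))

lemma mem_side_union {T : SimpleGraph ι} (hc : T.Connected) (a b s : ι) :
    s ∈ side T a b ∪ side T b a := by
  have hcl : ∀ x ∈ side T a b ∪ side T b a, ∀ y, T.Adj x y → y ∈ side T a b ∪ side T b a := by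
    intro x hx y hxy
    by_cases he : s(x, y) = s(a, b)
    · have hy : y = a ∨ y = b := by
        rcases Sym2.eq_iff.mp he with ⟨_, h⟩ | ⟨_, h⟩
        · exact Or.inr h
        · exact Or.inl h
      rcases hy with rfl | rfl
      · exact Or.inl (mem_side_self T y b)
      · exact Or.inr (mem_side_self T y a)
    · rcases hx with hx | hx
      · exact Or.inl (side_step hxy he hx)
      · refine Or.inr (side_step hxy ?_ hx)
        rw [Sym2.eq_swap (a := a)] at he  -- may need fixing
        exact he
  obtain ⟨w⟩ := hc.preconnected a s
  exact walk_closed hcl w (Or.inl (mem_side_self T a b))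

lemma side_disjoint {T : SimpleGraph ι} (hac : T.IsAcyclic) {a b : ι} (hadj : T.Adj a b)
    {s : ι} (h1 : s ∈ side T a b) (h2 : s ∈ side T b a) : False := by
  have hbr := (isAcyclic_iff_forall_adj_isBridge.mp hac) hadj
  rw [isBridge_iff] at hbr
  have h2' : (T.deleteEdges {s(a, b)}).Reachable b s := by
    have : s(b, a) = s(a, b) := Sym2.eq_swap
    rw [side, this] at h2; exact h2
  exact hbr (h1.trans h2'.symm)

lemma side_mono {T : SimpleGraph ι} {a b c d : ι}
    (ha : a ∉ side T d c) (hd : d ∈ side T b a) : side T d c ⊆ side T b a := by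
  classical
  intro y hy
  obtain ⟨w⟩ := hy
  have hasup : a ∉ w.support := fun ha' => ha ⟨w.takeUntil a ha'⟩
  have hedges : ∀ e ∈ w.edges, e ∈ T.edgeSet := fun e he =>
    (edgeSet_mono (deleteEdges_le _)) (w.edges_subset_edgeSet he)
  have hnab : ∀ e ∈ (w.transfer T hedges).edges, e ∉ ({s(b, a)} : Set (Sym2 ι)) := by
    intro e he hmem
    rw [mem_singleton_iff] at hmem
    subst hmem
    have : a ∈ (w.transfer T hedges).support :=
      Walk.snd_mem_support_of_mem_edges _ he
    rw [Walk.support_transfer] at this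
    exact hasup this
  exact hd.trans ⟨(w.transfer T hedges).toDeleteEdges _ hnab⟩


lemma inducedSep_swap (T : SimpleGraph ι) (Vt : ι → Set V) (t1 t2 : ι) :
    inducedSep T Vt t2 t1 = (inducedSep T Vt t1 t2).swap := rfl

lemma mem_both_sides {G : SimpleGraph V} {T : SimpleGraph ι} {Vt : ι → Set V}
    (hTD : IsTreeDecomp G T Vt) {t1 t2 : ι} (hadj : T.Adj t1 t2) {v : V}
    (h1 : v ∈ (inducedSep T Vt t1 t2).1) (h2 : v ∈ (inducedSep T Vt t1 t2).2) :
    v ∈ Vt t1 ∩ Vt t2 := by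
  classical
  obtain ⟨hT, _, _, hpath⟩ := hTD
  simp only [inducedSep, mem_iUnion] at h1 h2
  obtain ⟨s, hs, hvs⟩ := h1
  obtain ⟨s', hs', hvs'⟩ := h2
  obtain ⟨w⟩ := hT.isConnected.preconnected s s'
  have hedge : s(t1, t2) ∈ w.bypass.edges := by
    by_contra he
    have hr : (T.deleteEdges {s(t1, t2)}).Reachable s s' :=
      ⟨w.bypass.toDeleteEdges _ (by intro e hee hmem; rw [mem_singleton_iff] at hmem; exact he (hmem ▸ hee))⟩
    exact side_disjoint hT.IsAcyclic hadj (Reachable.trans hs hr) hs'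
  have ht1 : t1 ∈ w.bypass.support := Walk.fst_mem_support_of_mem_edges _ hedge
  have ht2 : t2 ∈ w.bypass.support := Walk.snd_mem_support_of_mem_edges _ hedge
  exact ⟨hpath s s' w.bypass w.bypass_isPath t1 ht1 ⟨hvs, hvs'⟩,
    hpath s s' w.bypass w.bypass_isPath t2 ht2 ⟨hvs, hvs'⟩⟩

lemma inducedSep_mem_Sk [Fintype V] {G : SimpleGraph V} {k : ℕ} {T : SimpleGraph ι}
    {Vt : ι → Set V} (hTD : IsTreeDecomp G T Vt) (hAd : AdhesionLt T Vt k)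
    (hprop : ∀ p ∈ inducedSeps T Vt, ProperSep p) {t1 t2 : ι} (hadj : T.Adj t1 t2) :
    inducedSep T Vt t1 t2 ∈ Sk G k := by
  have hc := hTD.1.isConnected
  refine ⟨⟨?_, ?_⟩, hprop _ ⟨t1, t2, hadj, rfl⟩, ?_⟩
  · apply eq_univ_of_forall
    intro x
    have hx : x ∈ ⋃ t, Vt t := hTD.2.1 ▸ mem_univ x
    obtain ⟨t, ht⟩ := mem_iUnion.mp hx
    rcases mem_side_union hc t1 t2 t with h | h
    · exact Or.inl (mem_biUnion h ht)
    · exact Or.inr (mem_biUnion h ht)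
  · rintro a ⟨ha1, ha2⟩ b ⟨hb1, hb2⟩ hab
    obtain ⟨t, hat, hbt⟩ := hTD.2.2.1 a b hab
    rcases mem_side_union hc t1 t2 t with h | h
    · exact hb2 (mem_biUnion h hbt)
    · exact ha2 (mem_biUnion h hat)
  · calc sepOrder (inducedSep T Vt t1 t2) ≤ (Vt t1 ∩ Vt t2).ncard := by
          apply ncard_le_ncard _ (toFinite _)
          intro v ⟨h1, h2⟩
          exact mem_both_sides hTD hadj h1 h2
        _ < k := hAd t1 t2 hadj

lemma forward [Fintype V] {G : SimpleGraph V} {k : ℕ} {O : Set (Set V × Set V)}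
    (hO : IsOrientation (Sk G k) O) (hcons : Consistent O)
    {ιT : Type} [Fintype ιT] {T : SimpleGraph ιT} {Vt : ιT → Set V}
    (hTD : IsTreeDecomp G T Vt) (hAd : AdhesionLt T Vt k)
    (hprop : ∀ p ∈ inducedSeps T Vt, ProperSep p) :
    ∃ t : ιT, O ∩ inducedSeps T Vt = Otow T Vt t := by
  have hc := hTD.1.isConnected
  have hac := hTD.1.IsAcyclic
  have hSk : ∀ {a b}, T.Adj a b → inducedSep T Vt a b ∈ Sk G k :=
    fun h => inducedSep_mem_Sk hTD hAd hprop h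
  set S : Set (ιT × ιT) := {e | T.Adj e.1 e.2 ∧ inducedSep T Vt e.1 e.2 ∈ O} with hS
  by_cases hne : S.Nonempty
  · obtain ⟨e0, he0, hmin⟩ :=
      Set.exists_min_image S (fun e => (side T e.2 e.1).ncard) (toFinite S) hne
    obtain ⟨hadj0, hO0⟩ := he0
    have good : ∀ a b, T.Adj a b → e0.2 ∈ side T b a → inducedSep T Vt a b ∈ O := by
      intro a b hab ht2
      by_contra hnot
      have hqO : inducedSep T Vt b a ∈ O :=
        (hO.2 _ (hSk hab.symm)).mpr hnot
      rcases mem_side_union hc e0.1 e0.2 a with hA | hB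
      · -- a on the e0.1 side : consistency contradiction
        have h1 : side T e0.2 e0.1 ⊆ side T b a :=
          side_mono (fun h => side_disjoint hac hadj0 hA h) ht2
        have h2 : side T a b ⊆ side T e0.1 e0.2 :=
          side_mono (fun h => side_disjoint hac hab h ht2) hA
        have hLE : SepLE (inducedSep T Vt b a).swap (inducedSep T Vt e0.1 e0.2) :=
          ⟨biUnion_subset_biUnion_left h2, biUnion_subset_biUnion_left h1⟩
        by_cases heq : inducedSep T Vt e0.1 e0.2 = inducedSep T Vt b a
        · obtain ⟨_, x, hx1, hx2⟩ := (hSk hab.symm).2.1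
          rw [heq] at hLE
          exact hx2 (hLE.1 hx1)
        · exact hcons _ hO0 _ hqO heq hLE
      · -- a on the e0.2 side : minimality contradiction
        have hne_edge : s(a, b) ≠ s(e0.1, e0.2) := by
          intro h
          rcases Sym2.eq_iff.mp h with ⟨h1, h2⟩ | ⟨h1, h2⟩ <;> subst h1 <;> subst h2
          · exact side_disjoint hac hadj0 (mem_side_self T e0.1 e0.2) hB
          · exact side_disjoint hac hadj0 ht2 (mem_side_self T e0.2 e0.1)
        have ht1' : e0.1 ∈ side T b a := by
          refine side_step hadj0.symm ?_ ht2
          intro h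
          apply hne_edge
          rw [Sym2.eq_swap (a := e0.2)] at h
          rw [Sym2.eq_swap (a := b)] at h
          exact h.symm ▸ rfl
        have hsub : side T a b ⊆ side T e0.2 e0.1 :=
          side_mono (fun h => side_disjoint hac hab h ht1') hB
        have hss : side T a b ⊂ side T e0.2 e0.1 := by
          refine ⟨hsub, fun hsup => ?_⟩
          exact side_disjoint hac hab (hsup (mem_side_self T e0.2 e0.1)) ht2
        have hlt := Set.ncard_lt_ncard hss (toFinite _)
        have hge := hmin (b, a) ⟨hab.symm, hqO⟩
        simp only at hge
        omega
    refine ⟨e0.2, ?_⟩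
    ext p
    constructor
    · rintro ⟨hpO, a, b, hab, rfl⟩
      rcases mem_side_union hc a b e0.2 with h | h
      · exact absurd ((hO.2 _ (hSk hab)).mp hpO) (not_not.mpr (good b a hab.symm h))
      · exact ⟨a, b, hab, h, rfl⟩
    · rintro ⟨a, b, hab, ht2, rfl⟩
      exact ⟨good a b hab ht2, a, b, hab, rfl⟩
  · have hnoadj : ∀ a b : ιT, ¬T.Adj a b := by
      intro a b hab
      apply hne
      by_cases h : inducedSep T Vt a b ∈ O
      · exact ⟨(a, b), hab, h⟩
      · exact ⟨(b, a), hab.symm, (hO.2 _ (hSk hab.symm)).mpr h⟩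
    have : Nonempty ιT := hc.nonempty
    refine ⟨Classical.arbitrary ιT, ?_⟩
    ext p
    constructor
    · rintro ⟨_, a, b, hab, _⟩
      exact absurd hab (hnoadj a b)
    · rintro ⟨a, b, hab, _, _⟩
      exact absurd hab (hnoadj a b)


def T3 : SimpleGraph (Fin 3) where
  Adj i j := s(i, j) = s(0, 1) ∨ s(i, j) = s(1, 2)
  symm := ⟨fun a b (h : s(a, b) = s(0, 1) ∨ s(a, b) = s(1, 2)) => by rwa [Sym2.eq_swap] at h⟩
  loopless := ⟨fun a (h : s(a, a) = s(0, 1) ∨ s(a, a) = s(1, 2)) => by rcases h with h | h <;> rw [Sym2.eq_iff] at h <;> omega⟩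

instance : DecidableRel T3.Adj := fun i j =>
  inferInstanceAs (Decidable (s(i, j) = s(0, 1) ∨ s(i, j) = s(1, 2)))

lemma T3_adj01 : T3.Adj 0 1 := by decide
lemma T3_adj12 : T3.Adj 1 2 := by decide

lemma side_T3_01 : side T3 0 1 = {(0 : Fin 3)} := by
  apply Subset.antisymm
  · intro s hs
    obtain ⟨w⟩ := hs
    refine walk_closed (U := {(0 : Fin 3)}) ?_ w rfl
    intro x hx y hxy
    rw [mem_singleton_iff] at hx
    rw [deleteEdges_adj, mem_singleton_iff] at hxy
    rw [mem_singleton_iff]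
    revert hx hxy; revert x y; decide
  · intro s hs
    rw [mem_singleton_iff] at hs; subst hs; exact mem_side_self T3 0 1

lemma side_T3_21 : side T3 2 1 = {(2 : Fin 3)} := by
  apply Subset.antisymm
  · intro s hs
    obtain ⟨w⟩ := hs
    refine walk_closed (U := {(2 : Fin 3)}) ?_ w rfl
    intro x hx y hxy
    rw [mem_singleton_iff] at hx
    rw [deleteEdges_adj, mem_singleton_iff] at hxy
    rw [mem_singleton_iff]
    revert hx hxy; revert x y; decide
  · intro s hs
    rw [mem_singleton_iff] at hs; subst hs; exact mem_side_self T3 2 1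

lemma side_T3_10 : side T3 1 0 = {(1 : Fin 3), 2} := by
  apply Subset.antisymm
  · intro s hs
    obtain ⟨w⟩ := hs
    refine walk_closed (U := {(1 : Fin 3), 2}) ?_ w (Or.inl rfl)
    intro x hx y hxy
    rw [mem_insert_iff, mem_singleton_iff] at hx
    rw [deleteEdges_adj, mem_singleton_iff] at hxy
    rw [mem_insert_iff, mem_singleton_iff]
    revert hx hxy; revert x y; decide
  · intro s hs
    rcases hs with rfl | hs
    · exact mem_side_self T3 1 0
    · rw [mem_singleton_iff] at hs; subst hs
      exact Adj.reachable (by rw [deleteEdges_adj, mem_singleton_iff]; exact ⟨by decide, by decide⟩)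

lemma side_T3_12 : side T3 1 2 = {(0 : Fin 3), 1} := by
  apply Subset.antisymm
  · intro s hs
    obtain ⟨w⟩ := hs
    refine walk_closed (U := {(0 : Fin 3), 1}) ?_ w (Or.inr rfl)
    intro x hx y hxy
    rw [mem_insert_iff, mem_singleton_iff] at hx
    rw [deleteEdges_adj, mem_singleton_iff] at hxy
    rw [mem_insert_iff, mem_singleton_iff]
    revert hx hxy; revert x y; decide
  · intro s hs
    rcases hs with rfl | hs
    · exact Adj.reachable (by rw [deleteEdges_adj, mem_singleton_iff]; exact ⟨by decide, by decide⟩)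
    · rw [mem_singleton_iff] at hs; subst hs
      exact mem_side_self T3 1 2

lemma T3_connected : T3.Connected := by
  rw [connected_iff]
  refine ⟨?_, ⟨0⟩⟩
  have r01 : T3.Reachable 0 1 := T3_adj01.reachable
  have r12 : T3.Reachable 1 2 := T3_adj12.reachable
  intro i j
  fin_cases i <;> fin_cases j
  · rfl
  · exact r01
  · exact r01.trans r12
  · exact r01.symm
  · rfl
  · exact r12
  · exact (r01.trans r12).symm
  · exact r12.symm
  · rfl

lemma T3_acyclic : T3.IsAcyclic := by
  rw [isAcyclic_iff_forall_adj_isBridge]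
  intro a b hab
  rw [isBridge_iff]
  have key : ∀ x y : Fin 3, T3.Adj x y → y ∉ side T3 x y := by
    intro x y hxy
    have : (x = 0 ∧ y = 1) ∨ (x = 1 ∧ y = 0) ∨ (x = 1 ∧ y = 2) ∨ (x = 2 ∧ y = 1) := by
      revert hxy; revert x y; decide
    rcases this with ⟨rfl, rfl⟩ | ⟨rfl, rfl⟩ | ⟨rfl, rfl⟩ | ⟨rfl, rfl⟩
    · rw [side_T3_01]; decide
    · rw [side_T3_10]; decide
    · rw [side_T3_12]; decide
    · rw [side_T3_21]; decide
  exact key a b hab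

lemma T3_isTree : T3.IsTree := ⟨T3_connected, T3_acyclic⟩

lemma neighbor_mem_tail {z y m : Fin 3} (w : T3.Walk z y) (hzy : z ≠ y)
    (hm : ∀ c, T3.Adj z c → c = m) : m ∈ w.support.tail := by
  cases w with
  | nil => exact absurd rfl hzy
  | cons had q =>
    obtain rfl := hm _ had
    simpa using q.start_mem_support

lemma no_interior {x y : Fin 3} {z m : Fin 3} (w : T3.Walk x y) (hw : w.IsPath)
    (hz : z ∈ w.support) (hzx : z ≠ x) (hzy : z ≠ y)
    (hm : ∀ c, T3.Adj z c → c = m) : False := by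
  classical
  have hspec := w.take_spec hz
  have hnodup := hw.support_nodup
  rw [← hspec, Walk.support_append] at hnodup
  have hdisj := List.disjoint_of_nodup_append hnodup
  have h2 : m ∈ (w.dropUntil z hz).support.tail :=
    neighbor_mem_tail _ hzy hm
  have h1 : m ∈ (w.takeUntil z hz).support := by
    have := neighbor_mem_tail (w.takeUntil z hz).reverse hzx hm
    have hmem : m ∈ (w.takeUntil z hz).reverse.support := List.mem_of_mem_tail this
    rw [Walk.support_reverse, List.mem_reverse] at hmem
    exact hmem
  exact hdisj h1 h2

lemma T3_path_cond {Vt : Fin 3 → Set V} (h02 : Vt 0 ∩ Vt 2 ⊆ Vt 1) :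
    ∀ (x y : Fin 3) (w : T3.Walk x y), w.IsPath → ∀ z ∈ w.support, Vt x ∩ Vt y ⊆ Vt z := by
  intro x y w hw z hz
  by_cases hzx : z = x
  · subst hzx; exact inter_subset_left
  by_cases hzy : z = y
  · subst hzy; exact inter_subset_right
  have hz1 : z = 1 := by
    by_contra h1
    have hm : ∀ c, T3.Adj z c → c = 1 := by
      intro c hc
      revert hc
      have : z = 0 ∨ z = 2 := by
        have h3 : ∀ u : Fin 3, u ≠ 1 → u = 0 ∨ u = 2 := by decide
        exact h3 z h1
      rcases this with rfl | rfl <;> (revert c; decide)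
    exact no_interior w hw hz hzx hzy hm
  subst hz1
  have hxy : x ≠ y := by
    rintro rfl
    rw [Walk.isPath_iff_eq_nil.mp hw] at hz
    simp only [Walk.support_nil, List.mem_singleton] at hz
    exact hzx hz
  have h3 : ∀ u : Fin 3, u ≠ 1 → u = 0 ∨ u = 2 := by decide
  have hx : x = 0 ∨ x = 2 := h3 x fun h => hzx h.symm
  have hy : y = 0 ∨ y = 2 := h3 y fun h => hzy h.symm
  rcases hx with rfl | rfl <;> rcases hy with rfl | rfl
  · exact absurd rfl hxy
  · exact h02
  · exact fun v hv => h02 ⟨hv.2, hv.1⟩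
  · exact absurd rfl hxy

lemma adj_same_side {G : SimpleGraph V} {r : Set V × Set V} (hr : IsSep G r) {u v : V}
    (h : G.Adj u v) : (u ∈ r.1 ∧ v ∈ r.1) ∨ (u ∈ r.2 ∧ v ∈ r.2) := by
  have hu : u ∈ r.1 ∪ r.2 := hr.1 ▸ mem_univ u
  have hv : v ∈ r.1 ∪ r.2 := hr.1 ▸ mem_univ v
  by_cases hu1 : u ∈ r.1 <;> by_cases hv1 : v ∈ r.1
  · exact Or.inl ⟨hu1, hv1⟩
  · have hv2 : v ∈ r.2 := hv.resolve_left hv1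
    by_cases hu2 : u ∈ r.2
    · exact Or.inr ⟨hu2, hv2⟩
    · exact absurd h (hr.2 u ⟨hu1, hu2⟩ v ⟨hv2, hv1⟩)
  · have hu2 : u ∈ r.2 := hu.resolve_left hu1
    by_cases hv2 : v ∈ r.2
    · exact Or.inr ⟨hu2, hv2⟩
    · exact absurd h.symm (hr.2 v ⟨hv1, hv2⟩ u ⟨hu2, hu1⟩)
  · exact Or.inr ⟨hu.resolve_left hu1, hv.resolve_left hv1⟩

lemma T3_adj_cases : ∀ a b : Fin 3, T3.Adj a b →
    (a = 0 ∧ b = 1) ∨ (a = 1 ∧ b = 0) ∨ (a = 1 ∧ b = 2) ∨ (a = 2 ∧ b = 1) := by decide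



lemma ncard_lt_of_subset_lt [Fintype V] {s t : Set V} {k : ℕ} (h : s ⊆ t)
    (ht : t.ncard < k) : s.ncard < k :=
  lt_of_le_of_lt (ncard_le_ncard h (toFinite t)) ht

lemma backward_main [Fintype V] {G : SimpleGraph V} {k : ℕ} {O : Set (Set V × Set V)}
    (hO : IsOrientation (Sk G k) O)
    (h : ∀ (ι : Type) (_ : Fintype ι) (T : SimpleGraph ι) (Vt : ι → Set V),
        IsTreeDecomp G T Vt → AdhesionLt T Vt k →
        (∀ p ∈ inducedSeps T Vt, ProperSep p) →
        ∃ t : ι, O ∩ inducedSeps T Vt = Otow T Vt t) :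
    Consistent O := by
  intro p hp q hq _ hLE
  obtain ⟨hDA, hBC⟩ := hLE
  have hpS := hO.1 hp
  have hqS := hO.1 hq
  set Vt : Fin 3 → Set V :=
    fun i => if i = 0 then q.2 else if i = 1 then p.1 ∩ q.1 else p.2 with hVt
  have hV0 : Vt 0 = q.2 := rfl
  have hV1 : Vt 1 = p.1 ∩ q.1 := rfl
  have hV2 : Vt 2 = p.2 := rfl
  have hCu : (p.1 ∩ q.1) ∪ p.2 = q.1 := by
    apply Subset.antisymm (union_subset inter_subset_right hBC)
    intro x hx
    by_cases hx2 : x ∈ p.2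
    · exact Or.inr hx2
    · exact Or.inl ⟨((hpS.1.1 ▸ mem_univ x : x ∈ p.1 ∪ p.2)).resolve_right hx2, hx⟩
  have hAu : q.2 ∪ (p.1 ∩ q.1) = p.1 := by
    apply Subset.antisymm (union_subset hDA inter_subset_left)
    intro x hx
    by_cases hx2 : x ∈ q.2
    · exact Or.inl hx2
    · exact Or.inr ⟨hx, ((hqS.1.1 ▸ mem_univ x : x ∈ q.1 ∪ q.2)).resolve_right hx2⟩
  have hsep01 : inducedSep T3 Vt 0 1 = q.swap := by
    unfold inducedSep
    rw [side_T3_01, side_T3_10, biUnion_singleton, biUnion_pair, hV0, hV1, hV2, hCu]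
    rfl
  have hsep10 : inducedSep T3 Vt 1 0 = q := by
    unfold inducedSep
    rw [side_T3_01, side_T3_10, biUnion_singleton, biUnion_pair, hV0, hV1, hV2, hCu]
  have hsep12 : inducedSep T3 Vt 1 2 = p := by
    unfold inducedSep
    rw [side_T3_21, side_T3_12, biUnion_singleton, biUnion_pair, hV0, hV1, hV2, hAu]
  have hsep21 : inducedSep T3 Vt 2 1 = p.swap := by
    unfold inducedSep
    rw [side_T3_21, side_T3_12, biUnion_singleton, biUnion_pair, hV0, hV1, hV2, hAu]
    rfl
  have hTD : IsTreeDecomp G T3 Vt := by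
    refine ⟨T3_isTree, ?_, ?_, T3_path_cond ?_⟩
    · apply eq_univ_of_forall
      intro x
      by_cases hx2 : x ∈ q.2
      · exact mem_iUnion.mpr ⟨0, hV0 ▸ hx2⟩
      have hx1 : x ∈ q.1 := ((hqS.1.1 ▸ mem_univ x : x ∈ q.1 ∪ q.2)).resolve_right hx2
      by_cases hxB : x ∈ p.2
      · exact mem_iUnion.mpr ⟨2, hV2 ▸ hxB⟩
      · have hxA : x ∈ p.1 := ((hpS.1.1 ▸ mem_univ x : x ∈ p.1 ∪ p.2)).resolve_right hxB
        exact mem_iUnion.mpr ⟨1, hV1 ▸ ⟨hxA, hx1⟩⟩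
    · intro u v huv
      rcases adj_same_side hqS.1 huv with ⟨h1, h2⟩ | ⟨h1, h2⟩
      · rcases adj_same_side hpS.1 huv with ⟨g1, g2⟩ | ⟨g1, g2⟩
        · exact ⟨1, hV1 ▸ ⟨⟨g1, h1⟩, ⟨g2, h2⟩⟩⟩
        · exact ⟨2, hV2 ▸ ⟨g1, g2⟩⟩
      · exact ⟨0, hV0 ▸ ⟨h1, h2⟩⟩
    · rw [hV0, hV1, hV2]
      exact fun v hv => ⟨hDA hv.1, hBC hv.2⟩
  have hAd : AdhesionLt T3 Vt k := by
    intro a b hadj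
    rcases T3_adj_cases a b hadj with ⟨rfl, rfl⟩ | ⟨rfl, rfl⟩ | ⟨rfl, rfl⟩ | ⟨rfl, rfl⟩
    · rw [hV0, hV1]
      refine ncard_lt_of_subset_lt ?_ hqS.2.2
      intro x hx
      exact ⟨hx.2.2, hx.1⟩
    · rw [hV0, hV1]
      refine ncard_lt_of_subset_lt ?_ hqS.2.2
      intro x hx
      exact ⟨hx.1.2, hx.2⟩
    · rw [hV1, hV2]
      refine ncard_lt_of_subset_lt ?_ hpS.2.2
      intro x hx
      exact ⟨hx.1.1, hx.2⟩
    · rw [hV1, hV2]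
      refine ncard_lt_of_subset_lt ?_ hpS.2.2
      intro x hx
      exact ⟨hx.2.1, hx.1⟩
  have hProp : ∀ r ∈ inducedSeps T3 Vt, ProperSep r := by
    rintro r ⟨t1, t2, hadj, rfl⟩
    rcases T3_adj_cases t1 t2 hadj with ⟨rfl, rfl⟩ | ⟨rfl, rfl⟩ | ⟨rfl, rfl⟩ | ⟨rfl, rfl⟩
    · rw [hsep01]; exact ⟨hqS.2.1.2, hqS.2.1.1⟩
    · rw [hsep10]; exact hqS.2.1
    · rw [hsep12]; exact hpS.2.1
    · rw [hsep21]; exact ⟨hpS.2.1.2, hpS.2.1.1⟩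
  obtain ⟨t, ht⟩ := h (Fin 3) inferInstance T3 Vt hTD hAd hProp
  have tcases : ∀ u : Fin 3, u = 0 ∨ u = 1 ∨ u = 2 := by decide
  rcases tcases t with rfl | rfl | rfl
  · have hmem : p.swap ∈ Otow T3 Vt 0 := by
      simp only [Otow, mem_setOf_eq]
      exact ⟨2, 1, by decide, by rw [side_T3_12]; exact Or.inl rfl, hsep21.symm⟩
    rw [← ht] at hmem
    exact ((hO.2 p hpS).mp hp) hmem.1
  · have hmem : p.swap ∈ Otow T3 Vt 1 := by
      simp only [Otow, mem_setOf_eq]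
      exact ⟨2, 1, by decide, by rw [side_T3_12]; exact Or.inr rfl, hsep21.symm⟩
    rw [← ht] at hmem
    exact ((hO.2 p hpS).mp hp) hmem.1
  · have hmem : q.swap ∈ Otow T3 Vt 2 := by
      simp only [Otow, mem_setOf_eq]
      exact ⟨0, 1, T3_adj01, by rw [side_T3_10]; exact Or.inr rfl, hsep01.symm⟩
    rw [← ht] at hmem
    exact ((hO.2 q hqS).mp hq) hmem.1

/-- Theorem 1.1(ii): an orientation of `S_k` is consistent iff it orients the separations
induced by any tree-decomposition of adhesion `< k` (with proper induced separations)
towards a node of its decomposition tree. -/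
theorem stmt_1 {V : Type*} [Fintype V] (G : SimpleGraph V) (k : ℕ)
    (O : Set (Set V × Set V)) (hO : IsOrientation (Sk G k) O) :
    Consistent O ↔
      ∀ (ι : Type) (_ : Fintype ι) (T : SimpleGraph ι) (Vt : ι → Set V),
        IsTreeDecomp G T Vt → AdhesionLt T Vt k →
        (∀ p ∈ inducedSeps T Vt, ProperSep p) →
        ∃ t : ι, O ∩ inducedSeps T Vt = Otow T Vt t := by
  constructor
  · intro hcons ιT instF T Vt hTD hAd hprop
    exact forward hO hcons hTD hAd hprop
  · exact fun h => backward_main hO h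


end CanonicalTD
end

section
/- Let G be a finite graph, k ∈ ℕ, and let X be a k-block of G. If X occurs as a part of some tree-decomposition of G of adhesion < k (i.e., X = V_t for some node t), then every separation in S(X) has order < k. -/
open SimpleGraph Set

namespace CanonicalTD

variable {V : Type*} {ι : Type*}

section Aux

variable {G : SimpleGraph V} {T : SimpleGraph ι} {Vt : ι → Set V}

lemma side_self (T : SimpleGraph ι) (t1 t2 : ι) : t1 ∈ side T t1 t2 :=
  Reachable.refl _

lemma side_total (hT : T.Connected) (t1 t2 t : ι) :
    t ∈ side T t1 t2 ∨ t ∈ side T t2 t1 := by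
  obtain ⟨w⟩ := hT t1 t
  have key : ∀ (u x : ι) (_ : T.Walk u x),
      u ∈ side T t1 t2 ∨ u ∈ side T t2 t1 →
      x ∈ side T t1 t2 ∨ x ∈ side T t2 t1 := by
    intro u x w
    induction w with
    | nil => exact id
    | @cons a b c hab w ih =>
      intro hu
      apply ih
      by_cases he : s(a, b) = s(t1, t2)
      · rw [Sym2.eq_iff] at he
        rcases he with ⟨rfl, rfl⟩ | ⟨rfl, rfl⟩
        · exact Or.inr (side_self T _ _)
        · exact Or.inl (side_self T _ _)
      · have hadj : (T.deleteEdges {s(t1, t2)}).Adj a b := by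
          rw [SimpleGraph.deleteEdges_adj]
          exact ⟨hab, by simpa using he⟩
        have hadj2 : (T.deleteEdges {s(t2, t1)}).Adj a b := by
          rw [show s(t2, t1) = s(t1, t2) from Sym2.eq_swap]
          exact hadj
        rcases hu with h | h
        · exact Or.inl (h.trans hadj.reachable)
        · exact Or.inr (h.trans hadj2.reachable)
  exact key t1 t w (Or.inl (side_self T t1 t2))

lemma inducedSep_isSep (hTD : IsTreeDecomp G T Vt) {t1 t2 : ι} (h12 : T.Adj t1 t2) :
    IsSep G (inducedSep T Vt t1 t2) := by
  have hT : T.Connected := hTD.1.isConnected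
  constructor
  · apply eq_univ_of_forall
    intro v
    have : v ∈ ⋃ t, Vt t := by rw [hTD.2.1]; trivial
    obtain ⟨t, ht⟩ := mem_iUnion.mp this
    rcases side_total hT t1 t2 t with h | h
    · exact Or.inl (mem_biUnion h ht)
    · exact Or.inr (mem_biUnion h ht)
  · rintro a ⟨ha1, ha2⟩ b ⟨hb1, hb2⟩ hadj
    obtain ⟨t, hat, hbt⟩ := hTD.2.2.1 a b hadj
    rcases side_total hT t1 t2 t with h | h
    · exact hb2 (mem_biUnion h hbt)
    · exact ha2 (mem_biUnion h hat)

lemma not_reachable_delete (hT : T.IsTree) {t1 t2 : ι} (h12 : T.Adj t1 t2) :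
    ¬ (T.deleteEdges {s(t1, t2)}).Reachable t1 t2 := by
  have hb : T.IsBridge s(t1, t2) :=
    (SimpleGraph.isAcyclic_iff_forall_adj_isBridge.mp hT.IsAcyclic) h12
  exact SimpleGraph.isBridge_iff.mp hb

lemma inducedSep_inter (hTD : IsTreeDecomp G T Vt) {t1 t2 : ι} (h12 : T.Adj t1 t2) :
    (inducedSep T Vt t1 t2).1 ∩ (inducedSep T Vt t1 t2).2 ⊆ Vt t1 ∩ Vt t2 := by
  rintro v ⟨hv1, hv2⟩
  obtain ⟨S1, ⟨s, rfl⟩, hvS1⟩ := hv1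
  obtain ⟨S1', ⟨hs, rfl⟩, hvs⟩ := hvS1
  obtain ⟨S2, ⟨s', rfl⟩, hvS2⟩ := hv2
  obtain ⟨S2', ⟨hs', rfl⟩, hvs'⟩ := hvS2
  -- hs : s ∈ side T t1 t2, hs' : s' ∈ side T t2 t1
  classical
  have hs'2 : (T.deleteEdges {s(t1, t2)}).Reachable t2 s' := by
    rwa [show s(t1, t2) = s(t2, t1) from Sym2.eq_swap]
  have hT : T.Connected := hTD.1.isConnected
  obtain ⟨w⟩ := hT s s'
  have hw : w.toPath.1.IsPath := w.toPath.2
  by_cases he : s(t1, t2) ∈ (w.toPath.1).edges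
  · have ht1 : t1 ∈ (w.toPath.1).support := Walk.fst_mem_support_of_mem_edges _ he
    have ht2 : t2 ∈ (w.toPath.1).support := Walk.snd_mem_support_of_mem_edges _ he
    have h1 := hTD.2.2.2 s s' w.toPath.1 hw t1 ht1 ⟨hvs, hvs'⟩
    have h2 := hTD.2.2.2 s s' w.toPath.1 hw t2 ht2 ⟨hvs, hvs'⟩
    exact ⟨h1, h2⟩
  · exfalso
    have hwd : (T.deleteEdges {s(t1, t2)}).Reachable s s' :=
      ⟨(w.toPath.1).toDeleteEdges {s(t1, t2)} (by rintro e he' rfl; exact he he')⟩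
    exact not_reachable_delete hTD.1 h12
      ((hs.trans hwd).trans hs'2.symm)

lemma connected_subset_side {p : Set V × Set V} (hp : IsSep G p)
    {D : Set V} (hD : (G.induce D).Connected) (hdisj : ∀ d ∈ D, d ∉ p.1 ∩ p.2)
    {d0 : V} (hd0 : d0 ∈ D) (hd01 : d0 ∈ p.1 \ p.2) : D ⊆ p.1 \ p.2 := by
  have step : ∀ a b : V, a ∈ p.1 \ p.2 → b ∈ D → G.Adj a b → b ∈ p.1 \ p.2 := by
    intro a b ha hbD hab
    have hb : b ∈ p.1 ∪ p.2 := by rw [hp.1]; trivial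
    rcases hb with hb | hb
    · exact ⟨hb, fun hb2 => hdisj b hbD ⟨hb, hb2⟩⟩
    · by_cases hb1 : b ∈ p.1
      · exact ⟨hb1, fun hb2 => hdisj b hbD ⟨hb1, hb2⟩⟩
      · exact absurd hab (hp.2 a ha b ⟨hb, hb1⟩)
  intro d hd
  obtain ⟨w⟩ := hD.preconnected ⟨d0, hd0⟩ ⟨d, hd⟩
  have key : ∀ (a b : ↥D) (_ : (G.induce D).Walk a b),
      (a : V) ∈ p.1 \ p.2 → (b : V) ∈ p.1 \ p.2 := by
    intro a b w
    induction w with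
    | nil => exact id
    | @cons x y z hxy w ih =>
      intro hx
      exact ih (step x y hx y.2 hxy)
  exact key _ _ w hd01

lemma induce_insert_connected {D : Set V} (hD : (G.induce D).Connected)
    {v d : V} (hd : d ∈ D) (hadj : G.Adj v d) : (G.induce (insert v D)).Connected := by
  have hsub : D ⊆ insert v D := subset_insert v D
  let f : G.induce D →g G.induce (insert v D) :=
    ⟨fun x => ⟨x.1, hsub x.2⟩, fun {a b} h => h⟩
  have hmap : ∀ a : ↥D, (G.induce (insert v D)).Reachable ⟨a.1, hsub a.2⟩ ⟨d, hsub hd⟩ := by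
    intro a
    exact (hD.preconnected a ⟨d, hd⟩).map f
  constructor
  intro x y
  have hx : ∀ z : ↥(insert v D), (G.induce (insert v D)).Reachable z ⟨d, hsub hd⟩ := by
    rintro ⟨z, hz⟩
    rcases hz with rfl | hz
    · exact SimpleGraph.Adj.reachable (by exact hadj)
    · exact hmap ⟨z, hz⟩
  exact (hx x).trans (hx y).symm

end Aux

/-- If a `k`-block `X` occurs as a part of some tree-decomposition of adhesion `< k`, then
every separation in `S(X)` has order `< k`. -/
theorem stmt_14 {V : Type*} [Fintype V] (G : SimpleGraph V) (k : ℕ)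
    (X : Set V) (hX : IsBlock G k X)
    (hpart : ∃ (ι : Type) (_ : Fintype ι) (T : SimpleGraph ι) (Vt : ι → Set V),
      IsTreeDecomp G T Vt ∧ AdhesionLt T Vt k ∧ ∃ t : ι, Vt t = X) :
    ∀ p ∈ SX G X, sepOrder p < k := by
  classical
  rintro p ⟨hpsep, hptight, hXB, hDX, hDconn, hDmax⟩
  obtain ⟨ι, _, T, Vt, hTD, hadh, t0, ht0⟩ := hpart
  -- Step 1: the separator is contained in X
  have hsubX : p.1 ∩ p.2 ⊆ X := by
    intro v hv
    by_contra hvX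
    obtain ⟨⟨a, ha, hva⟩, -⟩ := hptight v hv
    have hconn' := induce_insert_connected hDconn ha hva
    have heq := hDmax (insert v (p.1 \ p.2)) (subset_insert _ _) ?_ hconn'
    · have hvD : v ∈ p.1 \ p.2 := heq ▸ mem_insert v _
      exact hvD.2 hv.2
    · intro z hz
      rcases mem_insert_iff.mp hz with rfl | hz
      · exact hvX
      · exact hDX hz
  -- Step 2: pick a vertex of the component
  obtain ⟨⟨d0, hd0D⟩⟩ := hDconn.nonempty
  -- Step 3: a part containing d0
  have hcov : d0 ∈ ⋃ t, Vt t := by rw [hTD.2.1]; trivial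
  obtain ⟨s0, hd0s0⟩ := mem_iUnion.mp hcov
  have hd0X : d0 ∉ X := hDX hd0D
  have hs0ne : t0 ≠ s0 := by
    rintro rfl
    exact hd0X (ht0 ▸ hd0s0)
  -- Step 4: the first edge on the path from t0 towards s0
  have hT := hTD.1.isConnected
  obtain ⟨w⟩ := hT t0 s0
  obtain ⟨wp, hwp⟩ := w.toPath
  cases wp with
  | nil => exact absurd rfl hs0ne
  | @cons _ b _ h w' =>
    rw [Walk.cons_isPath_iff] at hwp
    have hside : s0 ∈ side T b t0 := by
      refine ⟨w'.toDeleteEdges {s(b, t0)} ?_⟩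
      intro e he hmem
      rw [mem_singleton_iff] at hmem
      subst hmem
      exact hwp.2 (Walk.snd_mem_support_of_mem_edges w' he)
    have hbt0 : T.Adj b t0 := h.symm
    have hqsep : IsSep G (inducedSep T Vt b t0) := inducedSep_isSep hTD hbt0
    have hqint : (inducedSep T Vt b t0).1 ∩ (inducedSep T Vt b t0).2 ⊆ Vt b ∩ Vt t0 :=
      inducedSep_inter hTD hbt0
    have hdisj : ∀ d ∈ p.1 \ p.2,
        d ∉ (inducedSep T Vt b t0).1 ∩ (inducedSep T Vt b t0).2 := by
      intro d hd hq'
      exact (hDX hd) (ht0 ▸ (hqint hq').2)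
    have hd0q1 : d0 ∈ (inducedSep T Vt b t0).1 := mem_biUnion hside hd0s0
    have hd0q : d0 ∈ (inducedSep T Vt b t0).1 \ (inducedSep T Vt b t0).2 :=
      ⟨hd0q1, fun h2 => hdisj d0 hd0D ⟨hd0q1, h2⟩⟩
    have hDside : p.1 \ p.2 ⊆ (inducedSep T Vt b t0).1 \ (inducedSep T Vt b t0).2 :=
      connected_subset_side hqsep hDconn hdisj hd0D hd0q
    -- Step 6: the separator of p lies in the adhesion set
    have hfinal : p.1 ∩ p.2 ⊆ Vt b ∩ Vt t0 := by
      intro v hv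
      apply hqint
      have hvX : v ∈ X := hsubX hv
      have hvt0 : v ∈ Vt t0 := by rw [ht0]; exact hvX
      have hv2 : v ∈ (inducedSep T Vt b t0).2 := mem_biUnion (side_self T t0 b) hvt0
      obtain ⟨⟨a, ha, hva⟩, -⟩ := hptight v hv
      have haq := hDside ha
      have hv1 : v ∈ (inducedSep T Vt b t0).1 := by
        by_contra hv1
        exact hqsep.2 a haq v ⟨hv2, hv1⟩ hva.symm
      exact ⟨hv1, hv2⟩
    calc sepOrder p = (p.1 ∩ p.2).ncard := rfl
      _ ≤ (Vt b ∩ Vt t0).ncard := Set.ncard_le_ncard hfinal (Set.toFinite _)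
      _ < k := hadh b t0 hbt0

end CanonicalTD
end
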